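/- arXiv:1707.03187 — 3 statements merged into one kernel-verified Lean document; each statement's English description precedes it below -/
import Mathlib

section
/- Let L and M be Fréchet spaces and f : L → M a continuous linear map whose image has finite codimension in M. Then the image of f is closed in M. -/
open Filter Set Topology Pointwise

section Helper
variable {G : Type*} [AddCommGroup G] [TopologicalSpace G] [IsTopologicalAddGroup G]

theorem closure_subset_add' (S : Set G) {V : Set G} (hV : V ∈ 𝓝 (0 : G)) :
    closure S ⊆ S + V := by
  intro x hx
  have hnV : -V ∈ 𝓝 (0 : G) := neg_mem_nhds_zero G hV
  have ht : (fun v => x + v) '' (-V) ∈ 𝓝 x := by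
    rw [← map_add_left_nhds_zero x]
    exact Filter.image_mem_map hnV
  obtain ⟨q, hq1, hq2⟩ := (mem_closure_iff_nhds.mp hx) _ ht
  obtain ⟨v, hv, rfl⟩ := hq1
  rw [Set.mem_neg] at hv
  exact ⟨x + v, hq2, -v, hv, by simp⟩
end Helper

section OMT
variable {P M : Type*}
  [AddCommGroup P] [Module ℝ P] [UniformSpace P] [IsUniformAddGroup P] [ContinuousSMul ℝ P]
  [AddCommGroup M] [Module ℝ M] [UniformSpace M] [IsUniformAddGroup M] [ContinuousSMul ℝ M]

theorem nearly_open [BaireSpace M] (g : P →L[ℝ] M) (hsurj : Function.Surjective g)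
    {U : Set P} (hU : U ∈ 𝓝 (0 : P)) : closure (g '' U) ∈ 𝓝 (0 : M) := by
  obtain ⟨V, hV, hVU⟩ : ∃ V ∈ 𝓝 (0 : P), V - V ⊆ U := by
    have h : Continuous fun p : P × P => p.1 - p.2 := continuous_fst.sub continuous_snd
    have h1 := h.tendsto ((0, 0) : P × P)
    rw [show (0:P) - 0 = 0 by simp] at h1
    rw [nhds_prod_eq] at h1
    have h2 := h1 hU
    rw [Filter.mem_map, Filter.mem_prod_iff] at h2
    obtain ⟨V₁, hV₁, V₂, hV₂, h12⟩ := h2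
    refine ⟨V₁ ∩ V₂, Filter.inter_mem hV₁ hV₂, ?_⟩
    rintro x ⟨a, ⟨ha1, _⟩, b, ⟨_, hb2⟩, rfl⟩
    exact h12 (Set.mk_mem_prod ha1 hb2)
  set A := closure (g '' V) with hA
  have habs : Absorbent ℝ V := absorbent_nhds_zero hV
  have hcover : ⋃ n : ℕ, ((n : ℝ) + 1) • A = univ := by
    refine eq_univ_of_forall fun y => ?_
    obtain ⟨x, rfl⟩ := hsurj y
    obtain ⟨c, -, hc⟩ := (Filter.hasBasis_cobounded_norm.eventually_iff).mp (habs x)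
    obtain ⟨n, hn⟩ := exists_nat_ge c
    have hx : x ∈ ((n:ℝ)+1) • V := by
      refine hc (show ((n:ℝ)+1) ∈ {x | c ≤ ‖x‖} from ?_) rfl
      simp only [mem_setOf_eq, Real.norm_eq_abs]
      rw [abs_of_nonneg (by positivity)]
      linarith
    refine mem_iUnion.2 ⟨n, ?_⟩
    obtain ⟨v, hv, rfl⟩ := hx
    rw [map_smul]
    exact smul_mem_smul_set (subset_closure (mem_image_of_mem _ hv))
  have hAc : ∀ n : ℕ, IsClosed (((n : ℝ) + 1) • A) := fun n => by
    have hne : ((n:ℝ)+1) ≠ 0 := by positivity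
    rw [hA, ← closure_smul₀' hne]
    exact isClosed_closure
  obtain ⟨n, hn⟩ : ∃ n : ℕ, (interior (((n : ℝ) + 1) • A)).Nonempty := by
    have : Nonempty M := ⟨0⟩
    exact nonempty_interior_of_iUnion_of_closed hAc hcover
  have hint : (interior A).Nonempty := by
    have hne : ((n:ℝ)+1) ≠ 0 := by positivity
    rw [interior_smul₀ hne] at hn
    exact smul_set_nonempty.mp hn
  obtain ⟨a, ha⟩ := hint
  -- A - a ⊆ closure (g '' U)
  have hsub : (fun z => z - a) '' interior A ⊆ closure (g '' U) := by
    rintro z ⟨b, hb, rfl⟩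
    have hbA : b ∈ A := interior_subset hb
    have haA : a ∈ A := interior_subset ha
    have : (b, a) ∈ closure ((g '' V) ×ˢ (g '' V)) := by
      rw [closure_prod_eq]; exact ⟨hbA, haA⟩
    have hcont : Continuous fun p : M × M => p.1 - p.2 := continuous_fst.sub continuous_snd
    have himg := (image_closure_subset_closure_image hcont) (mem_image_of_mem _ this)
    refine closure_mono ?_ himg
    rintro w ⟨⟨p, q⟩, ⟨⟨v₁, hv₁, rfl⟩, ⟨v₂, hv₂, rfl⟩⟩, rfl⟩
    exact ⟨v₁ - v₂, hVU (sub_mem_sub hv₁ hv₂), by simp⟩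
  have hopen : IsOpen ((fun z => z - a) '' interior A) :=
    (Homeomorph.subRight a).isOpenMap _ isOpen_interior
  exact Filter.mem_of_superset (hopen.mem_nhds ⟨a, ha, by simp⟩) hsub


theorem omt_image_nhds [CompleteSpace P]
    [FirstCountableTopology P] [FirstCountableTopology M] [T2Space M] [BaireSpace M]
    (g : P →L[ℝ] M) (hsurj : Function.Surjective g)
    {U : Set P} (hU : U ∈ 𝓝 (0 : P)) : g '' U ∈ 𝓝 (0 : M) := by
  obtain ⟨u, hub, humul⟩ := IsTopologicalAddGroup.exists_antitone_basis_nhds_zero P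
  obtain ⟨B, hBb, hBmul⟩ := IsTopologicalAddGroup.exists_antitone_basis_nhds_zero M
  have humem : ∀ k, u k ∈ 𝓝 (0 : P) := fun k => hub.toHasBasis.mem_of_mem trivial
  have hBmem : ∀ k, B k ∈ 𝓝 (0 : M) := fun k => hBb.toHasBasis.mem_of_mem trivial
  set W : ℕ → Set P := fun k => u k ∩ g ⁻¹' (B k) with hW
  have hWmem : ∀ k, W k ∈ 𝓝 (0 : P) := fun k =>
    Filter.inter_mem (humem k) (g.continuous.tendsto' 0 0 (map_zero g) (hBmem k))
  have hWu : ∀ k, W k ⊆ u k := fun k => Set.inter_subset_left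
  have hclB : ∀ k, closure (B (k+1)) ⊆ B k := fun k =>
    (closure_subset_add' _ (hBmem (k+1))).trans (hBmul k)
  -- main claim
  have key : ∀ n, closure (g '' W (n+2)) ⊆ g '' (u n) := by
    intro n
    intro y hy
    -- step function
    have step : ∀ (j : ℕ) (p : P), y - g p ∈ closure (g '' W (n+2+j)) →
        ∃ w ∈ W (n+2+j), y - g (p + w) ∈ closure (g '' W (n+3+j)) := by
      intro j p hp
      have hN : closure (g '' W (n+3+j)) ∈ 𝓝 (0 : M) := nearly_open g hsurj (hWmem _)
      have hnN : -closure (g '' W (n+3+j)) ∈ 𝓝 (0 : M) := neg_mem_nhds_zero M hN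
      have ht : (fun v => (y - g p) + v) '' (-closure (g '' W (n+3+j))) ∈ 𝓝 (y - g p) := by
        rw [← map_add_left_nhds_zero (y - g p)]
        exact Filter.image_mem_map hnN
      obtain ⟨q, hq1, hq2⟩ := (mem_closure_iff_nhds.mp hp) _ ht
      obtain ⟨m, hm, rfl⟩ := hq1
      rw [Set.mem_neg] at hm
      obtain ⟨w, hw, hgw⟩ := hq2
      refine ⟨w, hw, ?_⟩
      have : y - g (p + w) = -m := by
        rw [map_add, hgw]
        ring_nf
        abel
      rw [this]
      exact hm
    choose w hw1 hw2 using step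
    -- recursively defined partial sums
    let s : (j : ℕ) → {p : P // y - g p ∈ closure (g '' W (n+2+j))} := fun j =>
      Nat.rec ⟨0, by simpa using hy⟩ (fun j ih => ⟨ih.1 + w j ih.1 ih.2, by
        have := hw2 j ih.1 ih.2
        rwa [show n+3+j = n+2+(j+1) by omega] at this⟩) j
    have hdiff : ∀ j, (s (j+1)).1 = (s j).1 + w j (s j).1 (s j).2 := fun j => rfl
    have hzero : (s 0).1 = 0 := rfl
    -- telescoping
    have htel : ∀ m j, (s (j + m)).1 - (s j).1 ∈ u (n+1+j) := by
      intro m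
      induction m with
      | zero => intro j; simpa using mem_of_mem_nhds (humem (n+1+j))
      | succ m ih =>
        intro j
        have hidx : (j+1)+m = j+(m+1) := by omega
        have hval : (s ((j+1)+m)).1 = (s (j+(m+1))).1 :=
          congrArg (fun k => (s k).1) hidx
        have h1 : (s (j + (m+1))).1 - (s (j+1)).1 ∈ u (n+1+(j+1)) := by
          rw [← hval]; exact ih (j+1)
        have h2 : (s (j+1)).1 - (s j).1 ∈ u (n+2+j) := by
          rw [hdiff j]
          simpa using hWu _ (hw1 j (s j).1 (s j).2)
        have hsum : ((s (j + (m+1))).1 - (s (j+1)).1) + ((s (j+1)).1 - (s j).1)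
            ∈ u (n+1+j+1) + u (n+1+j+1) := by
          exact Set.add_mem_add (hub.antitone (by omega) h1) (hub.antitone (by omega) h2)
        have := humul (n+1+j) hsum
        rwa [sub_add_sub_cancel] at this
    -- Cauchy
    have hcauchy : CauchySeq (fun j => (s j).1) := by
      rw [cauchySeq_iff]
      intro V hV
      rw [uniformity_eq_comap_nhds_zero P, Filter.mem_comap] at hV
      obtain ⟨S, hS, hSV⟩ := hV
      have hS' : S ∩ (-S) ∈ 𝓝 (0 : P) := Filter.inter_mem hS (neg_mem_nhds_zero P hS)
      obtain ⟨k, -, hk⟩ := hub.toHasBasis.mem_iff.mp hS'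
      refine ⟨k, fun a ha b hb => ?_⟩
      apply hSV
      simp only [Set.mem_preimage]
      rcases le_total a b with hab | hab
      · obtain ⟨m, rfl⟩ := Nat.exists_eq_add_of_le hab
        have := htel m a
        have h2 : (s (a+m)).1 - (s a).1 ∈ S ∩ (-S) := hk (hub.antitone (by omega) this)
        exact h2.1
      · obtain ⟨m, rfl⟩ := Nat.exists_eq_add_of_le hab
        have := htel m b
        have h2 : (s (b+m)).1 - (s b).1 ∈ S ∩ (-S) := hk (hub.antitone (by omega) this)
        have := h2.2
        rw [Set.mem_neg] at this
        simpa using this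
    obtain ⟨x, hx⟩ := cauchySeq_tendsto_of_complete hcauchy
    -- x ∈ u n
    have hxu : x ∈ u n := by
      have hmem : ∀ m, (s m).1 ∈ u (n+1) := fun m => by
        have h0 := htel m 0
        have hval : (s (0+m)).1 = (s m).1 := congrArg (fun k => (s k).1) (Nat.zero_add m)
        rw [hval, hzero, sub_zero] at h0
        simpa using h0
      have hxcl : x ∈ closure (u (n+1)) :=
        mem_closure_of_tendsto hx (Filter.Eventually.of_forall hmem)
      have := closure_subset_add' (u (n+1)) (humem (n+2)) hxcl
      have h2 : u (n+1) + u (n+2) ⊆ u (n+1) + u (n+1) :=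
        Set.add_subset_add_left (hub.antitone (by omega))
      exact humul n (h2 this)
    -- y = g x
    have hyx : y = g x := by
      have h1 : Filter.Tendsto (fun j => y - g ((s j).1)) atTop (𝓝 (y - g x)) :=
        tendsto_const_nhds.sub ((g.continuous.tendsto x).comp hx)
      have h2 : Filter.Tendsto (fun j => y - g ((s j).1)) atTop (𝓝 (0 : M)) := by
        refine (hBb.toHasBasis.tendsto_right_iff).mpr fun k _ => ?_
        refine Filter.eventually_atTop.mpr ⟨k, fun j hj => ?_⟩
        have hmem : y - g ((s j).1) ∈ closure (g '' W (n+2+j)) := (s j).2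
        have hsubB : g '' W (n+2+j) ⊆ B (n+2+j) := by
          rintro - ⟨p, hp, rfl⟩
          exact hp.2
        have : y - g ((s j).1) ∈ closure (B (n+2+j)) := closure_mono hsubB hmem
        have h3 : closure (B (n+2+j)) ⊆ B (n+1+j) := by
          have := hclB (n+1+j)
          rwa [show n+1+j+1 = n+2+j by omega] at this
        exact hBb.antitone (by omega) (h3 this)
      have := tendsto_nhds_unique h1 h2
      exact sub_eq_zero.mp this
    exact ⟨x, hxu, hyx.symm⟩
  -- conclude
  obtain ⟨k, -, hk⟩ := hub.toHasBasis.mem_iff.mp hU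
  have h1 : closure (g '' W (k+2)) ∈ 𝓝 (0 : M) := nearly_open g hsurj (hWmem _)
  exact Filter.mem_of_superset h1 ((key k).trans (Set.image_mono hk))

end OMT

/-- Let `L` and `M` be Fréchet spaces (complete metrizable locally
convex topological vector spaces over `ℝ`) and `f : L → M` a continuous linear map
whose image has finite codimension in `M` (i.e. `M ⧸ range f` is finite dimensional).
Then the image of `f` is closed in `M`. -/
theorem image_closed_of_finite_codimension
    {L M : Type*}
    [AddCommGroup L] [Module ℝ L] [UniformSpace L] [IsUniformAddGroup L]
    [ContinuousSMul ℝ L] [LocallyConvexSpace ℝ L] [CompleteSpace L]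
    [TopologicalSpace.MetrizableSpace L]
    [AddCommGroup M] [Module ℝ M] [UniformSpace M] [IsUniformAddGroup M]
    [ContinuousSMul ℝ M] [LocallyConvexSpace ℝ M] [CompleteSpace M]
    [TopologicalSpace.MetrizableSpace M]
    (f : L →L[ℝ] M)
    (hcodim : FiniteDimensional ℝ (M ⧸ LinearMap.range (f : L →ₗ[ℝ] M))) :
    IsClosed (Set.range f) := by
  classical
  set F : Submodule ℝ M := LinearMap.range (f : L →ₗ[ℝ] M) with hF
  obtain ⟨E, hE⟩ := Submodule.exists_isCompl F
  have hEfin : FiniteDimensional ℝ E :=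
    Module.Finite.equiv (Submodule.quotientEquivOfIsCompl F E hE)
  -- Baire space instance on M
  have hcg : (uniformity M).IsCountablyGenerated := by
    rw [uniformity_eq_comap_nhds_zero M]
    infer_instance
  haveI := hcg
  -- complete space on E
  haveI : CompleteSpace E := by
    have h := E.complete_of_finiteDimensional
    exact completeSpace_coe_iff_isComplete.2 h
  haveI : IsUniformAddGroup E := E.toAddSubgroup.isUniformAddGroup
  haveI : FirstCountableTopology L := inferInstance
  haveI : FirstCountableTopology (↥E) := TopologicalSpace.Subtype.firstCountableTopology (E : Set M)
  -- the map g
  set g : (L × E) →L[ℝ] M := f.coprod E.subtypeL with hg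
  have hsurj : Function.Surjective g := by
    intro y
    have hy : y ∈ F ⊔ E := by rw [hE.sup_eq_top]; trivial
    obtain ⟨a, ha, b, hb, rfl⟩ := Submodule.mem_sup.mp hy
    obtain ⟨x, hx⟩ := ha
    exact ⟨(x, ⟨b, hb⟩), by simp [hg]; exact hx⟩
  -- g is an open map
  have hnhds : ∀ p : L × E, 𝓝 (g p) ≤ Filter.map g (𝓝 p) := by
    intro p
    have h0 : 𝓝 (0 : M) ≤ Filter.map g (𝓝 (0 : L × E)) := by
      intro S hS
      rw [Filter.mem_map] at hS
      exact Filter.mem_of_superset (omt_image_nhds g hsurj hS) (Set.image_preimage_subset _ _)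
    calc 𝓝 (g p) = Filter.map (g p + ·) (𝓝 0) := (map_add_left_nhds_zero (g p)).symm
      _ ≤ Filter.map (g p + ·) (Filter.map g (𝓝 0)) := Filter.map_mono h0
      _ = Filter.map (fun x => g p + g x) (𝓝 0) := Filter.map_map
      _ = Filter.map g (Filter.map (p + ·) (𝓝 0)) := by
          rw [Filter.map_map]; congr 1; ext x; simp [map_add]
      _ = Filter.map g (𝓝 p) := by rw [map_add_left_nhds_zero p]
  have hopen : IsOpenMap g := IsOpenMap.of_nhds_le hnhds
  have hquot : Topology.IsQuotientMap g := hopen.isQuotientMap g.continuous hsurj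
  have hrange : Set.range (⇑f) = (F : Set M) := by
    ext y; simp [hF, LinearMap.mem_range]
  rw [hrange, ← hquot.isClosed_preimage]
  have hpre : ⇑g ⁻¹' (F : Set M) = {p : L × E | p.2 = 0} := by
    ext ⟨x, e⟩
    simp only [Set.mem_preimage, Set.mem_setOf_eq, hg]
    constructor
    · intro h
      have hfx : f x ∈ F := ⟨x, rfl⟩
      have : (e : M) ∈ F := by
        have h2 : f x + (e : M) ∈ F := by simpa using h
        simpa using F.sub_mem h2 hfx
      have : (e : M) ∈ F ⊓ E := ⟨this, e.2⟩
      rw [hE.inf_eq_bot] at this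
      exact Subtype.ext (by simpa using this)
    · intro h
      simp only [h]
      have : g (x, 0) = f x := by simp [hg]
      rw [hg] at this
      rw [this]
      exact ⟨x, rfl⟩
  rw [hpre]
  have : IsClosed {p : L × E | p.2 = 0} :=
    isClosed_eq continuous_snd continuous_const
  exact this
end

section
/- Let L and M be Fréchet spaces, f : L → M a continuous surjective linear map, and N a closed linear subspace of L of finite codimension. Then f(N) is closed in M. -/
open Filter Topology Set
open scoped Uniformity Pointwise

section OpenMapping

variable {X Y : Type*}
  [AddCommGroup X] [Module ℝ X] [UniformSpace X] [IsUniformAddGroup X]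
  [ContinuousSMul ℝ X] [CompleteSpace X] [TopologicalSpace.MetrizableSpace X]
  [AddCommGroup Y] [Module ℝ Y] [UniformSpace Y] [IsUniformAddGroup Y]
  [ContinuousSMul ℝ Y] [CompleteSpace Y] [TopologicalSpace.MetrizableSpace Y]

theorem frechet_dense_step (T : X →L[ℝ] Y) (hT : Function.Surjective T)
    {U : Set X} (hU : U ∈ 𝓝 0) : closure (T '' U) ∈ 𝓝 (0 : Y) := by
  haveI : (𝓤 Y).IsCountablyGenerated := IsUniformAddGroup.uniformity_countably_generated
  obtain ⟨V₀, hV₀, hV₀U⟩ := exists_nhds_zero_half hU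
  set V : Set X := V₀ ∩ (-V₀) with hVdef
  have hV : V ∈ 𝓝 (0 : X) := inter_mem hV₀ (neg_mem_nhds_zero X hV₀)
  have hVsub : ∀ a ∈ V, ∀ b ∈ V, a - b ∈ U := by
    intro a ha b hb
    have : -b ∈ V₀ := hb.2
    simpa [sub_eq_add_neg] using hV₀U a ha.1 (-b) this
  have hcover : (⋃ n : ℕ, closure (((n : ℝ) + 1) • (T '' V))) = univ := by
    refine eq_univ_of_forall fun y => ?_
    obtain ⟨x, rfl⟩ := hT y
    have habs : ∃ n : ℕ, ((n : ℝ) + 1)⁻¹ • x ∈ V := by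
      have h1 : Tendsto (fun n : ℕ => ((n : ℝ) + 1)⁻¹) atTop (𝓝 0) := by
        have : Tendsto (fun n : ℕ => 1 / ((n : ℝ) + 1)) atTop (𝓝 0) := tendsto_one_div_add_atTop_nhds_zero_nat
        simpa [one_div] using this
      have h2 : Tendsto (fun n : ℕ => ((n : ℝ) + 1)⁻¹ • x) atTop (𝓝 0) := by
        simpa using h1.smul_const x
      exact (h2.eventually_mem hV).exists
    obtain ⟨n, hn⟩ := habs
    refine mem_iUnion.2 ⟨n, subset_closure ?_⟩
    have hne : ((n : ℝ) + 1) ≠ 0 := by positivity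
    have hx : x ∈ ((n : ℝ) + 1) • V := by
      refine ⟨((n : ℝ) + 1)⁻¹ • x, hn, ?_⟩
      simp [smul_smul, mul_inv_cancel₀ hne]
    obtain ⟨v, hv, rfl⟩ := hx
    exact ⟨T v, ⟨v, hv, rfl⟩, by simp⟩
  obtain ⟨n, hn⟩ := nonempty_interior_of_iUnion_of_closed
    (fun n : ℕ => isClosed_closure (s := ((n : ℝ) + 1) • (T '' V))) hcover
  have hne : ((n : ℝ) + 1) ≠ 0 := by positivity
  have hint : (interior (closure (T '' V))).Nonempty := by
    rw [closure_smul₀' hne, interior_smul₀ hne] at hn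
    obtain ⟨_, w, hw, rfl⟩ := hn; exact ⟨w, hw⟩
  obtain ⟨y0, hy0⟩ := hint
  have hy0' : y0 ∈ closure (T '' V) := interior_subset hy0
  have hmem : (fun z => z - y0) '' (interior (closure (T '' V))) ∈ 𝓝 (0 : Y) := by
    have : IsOpen ((fun z => z - y0) '' (interior (closure (T '' V)))) :=
      (isOpenMap_sub_right y0) _ isOpen_interior
    exact this.mem_nhds ⟨y0, hy0, sub_self y0⟩
  refine mem_of_superset hmem ?_
  rintro _ ⟨z, hz, rfl⟩
  have hz' : z ∈ closure (T '' V) := interior_subset hz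
  refine map_mem_closure₂ (f := fun a b => a - b) continuous_sub hz' hy0'
    (fun a ha b hb => ?_)
  obtain ⟨va, hva, rfl⟩ := ha
  obtain ⟨vb, hvb, rfl⟩ := hb
  exact ⟨va - vb, hVsub va hva vb hvb, by simp⟩

theorem frechet_map_nhds (T : X →L[ℝ] Y) (hT : Function.Surjective T)
    {U : Set X} (hU : U ∈ 𝓝 0) : T '' U ∈ 𝓝 (0 : Y) := by
  haveI : (𝓤 Y).IsCountablyGenerated := IsUniformAddGroup.uniformity_countably_generated
  obtain ⟨B, hB⟩ := (𝓝 (0 : X)).exists_antitone_basis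
  obtain ⟨C, hC⟩ := (𝓝 (0 : Y)).exists_antitone_basis
  obtain ⟨U₁, hU₁mem, hU₁closed, hU₁sub⟩ := exists_mem_nhds_isClosed_subset hU
  set U' : Set X := U₁ ∩ (-U₁) with hU'def
  have hU'mem : U' ∈ 𝓝 (0 : X) := inter_mem hU₁mem (neg_mem_nhds_zero X hU₁mem)
  have hU'closed : IsClosed U' := hU₁closed.inter hU₁closed.neg
  have hU'sub : U' ⊆ U := fun a ha => hU₁sub ha.1
  have hU'symm : ∀ a ∈ U', -a ∈ U' := fun a ha => ⟨ha.2, by simpa using ha.1⟩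
  -- recursive construction of the sequence of neighborhoods V n
  have hstep : ∀ (n : ℕ) (W : Set X), ∃ V' : Set X, W ∈ 𝓝 (0 : X) →
      (V' ∈ 𝓝 (0 : X) ∧ V' + V' ⊆ W ∧ V' ⊆ B n ∧ V' ⊆ T ⁻¹' (C n) ∧ ∀ a ∈ V', -a ∈ V') := by
    intro n W
    by_cases hW : W ∈ 𝓝 (0 : X)
    · obtain ⟨V₁, hV₁, hV₁W⟩ := exists_nhds_zero_half hW
      have hBn : B n ∈ 𝓝 (0 : X) := hB.mem n
      have hCn : T ⁻¹' (C n) ∈ 𝓝 (0 : X) := by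
        have : Tendsto T (𝓝 0) (𝓝 0) := by
          simpa using T.continuous.tendsto 0
        exact this (hC.mem n)
      set W' : Set X := V₁ ∩ B n ∩ T ⁻¹' (C n) with hW'def
      have hW'mem : W' ∈ 𝓝 (0 : X) := inter_mem (inter_mem hV₁ hBn) hCn
      refine ⟨W' ∩ (-W'), fun _ => ⟨inter_mem hW'mem (neg_mem_nhds_zero X hW'mem), ?_, ?_, ?_, ?_⟩⟩
      · rintro _ ⟨a, ha, b, hb, rfl⟩
        exact hV₁W a ha.1.1.1 b hb.1.1.1
      · exact fun a ha => ha.1.1.2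
      · exact fun a ha => ha.1.2
      · exact fun a ha => ⟨ha.2, by simpa using ha.1⟩
    · exact ⟨∅, fun h => absurd h hW⟩
  choose g hg using hstep
  set V : ℕ → Set X := fun n => Nat.rec U' (fun n Vn => g (n + 1) Vn) n with hVdef
  have hV0 : V 0 = U' := rfl
  have hVsucc : ∀ n, V (n + 1) = g (n + 1) (V n) := fun n => rfl
  have hVmem : ∀ n, V n ∈ 𝓝 (0 : X) := by
    intro n; induction n with
    | zero => exact hU'mem
    | succ n ih => exact (hg (n + 1) (V n) ih).1
  have hVadd : ∀ n, V (n + 1) + V (n + 1) ⊆ V n := fun n => (hg (n + 1) (V n) (hVmem n)).2.1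
  have hVB : ∀ n, V (n + 1) ⊆ B (n + 1) := fun n => (hg (n + 1) (V n) (hVmem n)).2.2.1
  have hVC : ∀ n, V (n + 1) ⊆ T ⁻¹' (C (n + 1)) := fun n => (hg (n + 1) (V n) (hVmem n)).2.2.2.1
  have hVsymm : ∀ n, ∀ a ∈ V n, -a ∈ V n := by
    intro n; induction n with
    | zero => exact hU'symm
    | succ n ih => exact (hg (n + 1) (V n) (hVmem n)).2.2.2.2
  have hVmono : ∀ n, V (n + 1) ⊆ V n := by
    intro n a ha
    have h0 : (0 : X) ∈ V (n + 1) := mem_of_mem_nhds (hVmem (n + 1))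
    have : a + 0 ∈ V (n + 1) + V (n + 1) := add_mem_add ha h0
    simpa using hVadd n this
  have hVanti : ∀ {a b : ℕ}, a ≤ b → V b ⊆ V a := by
    intro a b hab
    induction hab with
    | refl => exact subset_rfl
    | step h ih => exact (hVmono _).trans ih
  -- sums of elements of V (k+i+1) lie in V k
  have hsum : ∀ (m k : ℕ) (x : ℕ → X), (∀ i, x i ∈ V (k + i + 1)) →
      (∑ i ∈ Finset.range m, x i) ∈ V k := by
    intro m
    induction m with
    | zero => intro k x _; simpa using mem_of_mem_nhds (hVmem k)
    | succ m ih =>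
      intro k x hx
      rw [Finset.sum_range_succ']
      refine hVadd k (add_mem_add ?_ ?_)
      · refine ih (k + 1) (fun i => x (i + 1)) fun i => ?_
        have := hx (i + 1)
        rwa [show k + (i + 1) + 1 = k + 1 + i + 1 by omega] at this
      · simpa using hx 0
  -- main claim
  have hmain : closure (T '' V 1) ⊆ T '' U := by
    intro y hy
    have hstep2 : ∀ (n : ℕ) (r : Y), ∃ x : X, r ∈ closure (T '' V (n + 1)) →
        (x ∈ V (n + 1) ∧ r - T x ∈ closure (T '' V (n + 2))) := by
      intro n r
      by_cases hr : r ∈ closure (T '' V (n + 1))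
      · have hnhd : closure (T '' V (n + 2)) ∈ 𝓝 (0 : Y) :=
          frechet_dense_step T hT (hVmem (n + 2))
        have hpre : (fun z => r - z) ⁻¹' closure (T '' V (n + 2)) ∈ 𝓝 r := by
          have : Tendsto (fun z => r - z) (𝓝 r) (𝓝 0) := by
            have h := ((continuous_const (y := r)).sub continuous_id).tendsto r
            convert h using 2
            · rfl
            · exact (sub_self r).symm
          exact this hnhd
        obtain ⟨z, hz1, hz2⟩ := mem_closure_iff_nhds.1 hr _ hpre
        obtain ⟨x, hx, rfl⟩ := hz2
        exact ⟨x, fun _ => ⟨hx, hz1⟩⟩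
      · exact ⟨0, fun h => absurd h hr⟩
    choose g2 hg2 using hstep2
    set r : ℕ → Y := fun n => Nat.rec y (fun n rn => rn - T (g2 n rn)) n with hrdef
    set x : ℕ → X := fun n => g2 n (r n) with hxdef
    have hr0 : r 0 = y := rfl
    have hrsucc : ∀ n, r (n + 1) = r n - T (x n) := fun n => rfl
    have hinv : ∀ n, r n ∈ closure (T '' V (n + 1)) := by
      intro n; induction n with
      | zero => exact hy
      | succ n ih => exact (hg2 n (r n) ih).2
    have hx : ∀ n, x n ∈ V (n + 1) := fun n => (hg2 n (r n) (hinv n)).1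
    set s : ℕ → X := fun m => ∑ i ∈ Finset.range m, x i with hsdef
    have hs : ∀ m, s m ∈ V 0 := fun m => hsum m 0 x fun i => by simpa using hx i
    have hdiff : ∀ {m m' : ℕ}, m ≤ m' → s m' - s m ∈ V m := by
      intro m m' hmm
      have : s m' - s m = ∑ i ∈ Finset.Ico m m', x i := (Finset.sum_Ico_eq_sub _ hmm).symm
      rw [this, Finset.sum_Ico_eq_sum_range]
      exact hsum _ m (fun i => x (m + i)) fun i => by
        have := hx (m + i); simpa using this
    have hcauchy : CauchySeq s := by
      refine cauchySeq_of_controlled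
        (fun n : ℕ => {p : X × X | p.2 - p.1 ∈ V n ∧ p.1 - p.2 ∈ V n}) ?_ ?_
      · intro t ht
        rw [uniformity_eq_comap_nhds_zero X] at ht
        obtain ⟨w, hw, hwt⟩ := ht
        obtain ⟨i, hi⟩ := hB.mem_iff.1 hw
        refine ⟨i + 1, fun p hp => hwt ?_⟩
        exact hi (hB.antitone (Nat.le_succ i) (hVB i hp.1))
      · intro NN m m' hm hm'
        rcases le_total m m' with h | h
        · refine ⟨hVanti hm (hdiff h), hVanti hm ?_⟩
          have := hVsymm m _ (hdiff h)
          simpa [neg_sub] using this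
        · refine ⟨hVanti hm' ?_, hVanti hm' (hdiff h)⟩
          have := hVsymm m' _ (hdiff h)
          simpa [neg_sub] using this
    obtain ⟨xl, hxl⟩ := cauchySeq_tendsto_of_complete hcauchy
    have hxlU : xl ∈ U := by
      have : xl ∈ closure (V 0) :=
        mem_closure_of_tendsto hxl (Eventually.of_forall hs)
      rw [hV0] at this
      exact hU'sub (hU'closed.closure_eq ▸ this)
    have hry : ∀ n, r n = y - T (s n) := by
      intro n; induction n with
      | zero => simp [hr0, hsdef]
      | succ n ih =>
        rw [hrsucc n, ih, hsdef]
        simp only [Finset.sum_range_succ, map_add]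
        abel
    have hlim1 : Tendsto r atTop (𝓝 (y - T xl)) := by
      have hTs : Tendsto (fun n => T (s n)) atTop (𝓝 (T xl)) :=
        (T.continuous.tendsto xl).comp hxl
      have := tendsto_const_nhds (x := y) (f := atTop (α := ℕ)) |>.sub hTs
      simpa [← hry] using this
    have hlim0 : Tendsto r atTop (𝓝 (0 : Y)) := by
      intro O hO
      obtain ⟨O', hO'mem, hO'closed, hO'sub⟩ := exists_mem_nhds_isClosed_subset hO
      obtain ⟨i, hi⟩ := hC.mem_iff.1 hO'mem
      rw [Filter.mem_map]
      filter_upwards [Filter.Ici_mem_atTop i] with n (hn : i ≤ n)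
      have h1 : r n ∈ closure (T '' V (n + 1)) := hinv n
      have h2 : T '' V (n + 1) ⊆ C (n + 1) := by
        rintro _ ⟨v, hv, rfl⟩; exact hVC n hv
      have h3 : C (n + 1) ⊆ O' := (hC.antitone (by omega)).trans hi
      have : r n ∈ closure O' := closure_mono (h2.trans h3) h1
      exact hO'sub (hO'closed.closure_eq ▸ this)
    have : y - T xl = 0 := tendsto_nhds_unique hlim1 hlim0
    exact ⟨xl, hxlU, (sub_eq_zero.1 this).symm⟩
  exact mem_of_superset (frechet_dense_step T hT (hVmem 1)) hmain

theorem frechet_isOpenMap (T : X →L[ℝ] Y) (hT : Function.Surjective T) :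
    IsOpenMap T := by
  intro O hO
  rw [isOpen_iff_mem_nhds]
  rintro _ ⟨x, hx, rfl⟩
  have h1 : (fun w => w - x) '' O ∈ 𝓝 (0 : X) := by
    have : IsOpen ((fun w => w - x) '' O) := (isOpenMap_sub_right x) O hO
    exact this.mem_nhds ⟨x, hx, sub_self x⟩
  have h2 : T '' ((fun w => w - x) '' O) ∈ 𝓝 (0 : Y) := frechet_map_nhds T hT h1
  have h3 : (fun z => T x + z) '' (T '' ((fun w => w - x) '' O)) ∈ 𝓝 (T x) := by
    have := (isOpenMap_add_left (T x)).image_mem_nhds h2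
    simpa using this
  refine mem_of_superset h3 ?_
  rintro _ ⟨_, ⟨_, ⟨w, hw, rfl⟩, rfl⟩, rfl⟩
  exact ⟨w, hw, by simp [map_sub]⟩

end OpenMapping

/-- Let `L` and `M` be Fréchet spaces, `f : L → M` a continuous
surjective linear map, and `N ⊆ L` a closed linear subspace of finite codimension
(i.e. `L ⧸ N` is finite dimensional). Then `f(N)` is closed in `M`. -/
theorem image_of_closed_finite_codim_subspace_closed
    {L M : Type*}
    [AddCommGroup L] [Module ℝ L] [UniformSpace L] [IsUniformAddGroup L]
    [ContinuousSMul ℝ L] [LocallyConvexSpace ℝ L] [CompleteSpace L]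
    [TopologicalSpace.MetrizableSpace L]
    [AddCommGroup M] [Module ℝ M] [UniformSpace M] [IsUniformAddGroup M]
    [ContinuousSMul ℝ M] [LocallyConvexSpace ℝ M] [CompleteSpace M]
    [TopologicalSpace.MetrizableSpace M]
    (f : L →L[ℝ] M) (hf : Function.Surjective f)
    (N : Submodule ℝ L) (hNclosed : IsClosed (N : Set L))
    (hNcodim : FiniteDimensional ℝ (L ⧸ N)) :
    IsClosed (f '' (N : Set L)) := by
  classical
  set K : Submodule ℝ L := LinearMap.ker (f : L →ₗ[ℝ] M) with hKdef
  set N' : Submodule ℝ L := N ⊔ K with hN'def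
  haveI : IsClosed (N : Set L) := hNclosed
  -- N' is closed, being the preimage of a (closed) submodule of the
  -- finite-dimensional Hausdorff space L ⧸ N
  have hN'closed : IsClosed (N' : Set L) := by
    have hcomap : Submodule.comap N.mkQ (Submodule.map N.mkQ N') = N' := by
      rw [Submodule.comap_map_mkQ]
      exact sup_eq_right.2 le_sup_left
    have hset : N.mkQ ⁻¹' ((Submodule.map N.mkQ N' : Submodule ℝ (L ⧸ N)) : Set (L ⧸ N)) = (N' : Set L) :=
      calc N.mkQ ⁻¹' ((Submodule.map N.mkQ N' : Submodule ℝ (L ⧸ N)) : Set (L ⧸ N))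
          = ((Submodule.comap N.mkQ (Submodule.map N.mkQ N') : Submodule ℝ L) : Set L) := rfl
        _ = (N' : Set L) := congrArg SetLike.coe hcomap
    rw [← hset]
    haveI : Module.Finite ℝ (Submodule.map N.mkQ N') :=
      FiniteDimensional.finiteDimensional_submodule _
    have hclosed2 : IsClosed ((Submodule.map N.mkQ N' : Submodule ℝ (L ⧸ N)) : Set (L ⧸ N)) :=
      Submodule.closed_of_finiteDimensional _
    exact hclosed2.preimage continuous_quot_mk
  -- f '' N = f '' N'
  have himg : f '' (N : Set L) = f '' (N' : Set L) := by
    refine subset_antisymm (Set.image_mono ?_) ?_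
    · exact fun a ha => (le_sup_left : N ≤ N') ha
    · rintro _ ⟨x, hx, rfl⟩
      obtain ⟨n, hn, k, hk, rfl⟩ := Submodule.mem_sup.1 hx
      refine ⟨n, hn, ?_⟩
      have hk0 : f k = 0 := LinearMap.mem_ker.1 hk
      simp [hk0]
  -- the complement of f '' N' is the image of the open complement of N'
  have hcompl : f '' ((N' : Set L)ᶜ) = (f '' (N' : Set L))ᶜ := by
    ext y
    constructor
    · rintro ⟨x, hx, rfl⟩ ⟨x', hx', hxx⟩
      refine hx ?_
      have hxK : x - x' ∈ K := by
        simp only [hKdef, LinearMap.mem_ker, ContinuousLinearMap.coe_coe, map_sub, hxx, sub_self]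
      have : x' + (x - x') ∈ N' := N'.add_mem hx' ((le_sup_right : K ≤ N') hxK)
      simpa using this
    · intro hy
      obtain ⟨x, rfl⟩ := hf y
      refine ⟨x, fun hx => hy ⟨x, hx, rfl⟩, rfl⟩
  rw [himg, ← isOpen_compl_iff, ← hcompl]
  exact frechet_isOpenMap f hf _ hN'closed.isOpen_compl
end

section
/- Let E be a locally convex topological vector space, P ⊆ E' a closed convex cone in the dual with a compact convex basis P̃ (i.e. P̃ compact convex, 0 ∉ P̃, and P = ℝ≥0·P̃), and L ⊆ E' a closed linear subspace with L ∩ P̃ = ∅. Then there exists Ω ∈ E such that T(Ω) = 0 for all T ∈ L and T(Ω) > 0 for all T ∈ P̃. -/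
/-- Every continuous linear functional on `WeakDual ℝ E` is evaluation at a point of `E`. -/
theorem weakDual_eval_surj {E : Type*} [AddCommGroup E] [Module ℝ E] [TopologicalSpace E]
    (f : WeakDual ℝ E →L[ℝ] ℝ) : ∃ Ω : E, ∀ T : WeakDual ℝ E, f T = T Ω := by
  haveI : Nonempty E := ⟨0⟩
  set B := topDualPairing ℝ E with hB
  have hws : WithSeminorms (LinearMap.toSeminormFamily B : E → Seminorm ℝ (WeakDual ℝ E)) :=
    LinearMap.weakBilin_withSeminorms B
  set q : Seminorm ℝ (WeakDual ℝ E) := (normSeminorm ℝ ℝ).comp f.toLinearMap with hq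
  have hqc : Continuous q := by
    have : Continuous fun T : WeakDual ℝ E => ‖f T‖ := f.continuous.norm
    exact this
  obtain ⟨s, C, hC, hle⟩ := Seminorm.bound_of_continuous hws q hqc
  -- evaluation maps
  let Lm : s → (WeakDual ℝ E →ₗ[ℝ] ℝ) := fun y =>
    { toFun := fun T => T (y : E)
      map_add' := fun T T' => rfl
      map_smul' := fun c T => rfl }
  have hker : ⨅ i : s, LinearMap.ker (Lm i) ≤ LinearMap.ker (f : WeakDual ℝ E →ₗ[ℝ] ℝ) := by
    intro T hT
    simp only [Submodule.mem_iInf, LinearMap.mem_ker] at hT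
    have hzero : ∀ y ∈ s, (LinearMap.toSeminormFamily B y) T = 0 := by
      intro y hy
      have h : T y = 0 := hT ⟨y, hy⟩
      show ‖T y‖ = 0
      show ‖T y‖ = 0
      simp [h]
    have hsup : (s.sup (LinearMap.toSeminormFamily B)) T ≤ 0 :=
      Seminorm.finset_sup_apply_le le_rfl (fun y hy => le_of_eq (hzero y hy))
    have hqt : q T ≤ 0 := by
      calc q T ≤ (C • s.sup (LinearMap.toSeminormFamily B)) T := hle T
        _ = (C : ℝ) * (s.sup (LinearMap.toSeminormFamily B)) T := rfl
        _ ≤ 0 := by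
            have : (0:ℝ) ≤ (C:ℝ) := C.coe_nonneg
            nlinarith [hsup]
    have : ‖f T‖ ≤ 0 := hqt
    have : f T = 0 := by
      have := norm_le_zero_iff.mp this
      exact this
    exact this
  have hmem : (f : WeakDual ℝ E →ₗ[ℝ] ℝ) ∈ Submodule.span ℝ (Set.range Lm) :=
    mem_span_of_iInf_ker_le_ker hker
  obtain ⟨c, hcf⟩ := (Submodule.mem_span_range_iff_exists_fun ℝ).1 hmem
  refine ⟨∑ i ∈ Finset.univ, c i • (i : E), fun T => ?_⟩
  have := LinearMap.congr_fun hcf T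
  simp only [LinearMap.coe_sum, Finset.sum_apply, LinearMap.smul_apply] at this
  rw [map_sum]
  rw [show f T = (f : WeakDual ℝ E →ₗ[ℝ] ℝ) T from rfl, ← this]
  refine Finset.sum_congr rfl fun i _ => ?_
  rw [map_smul T]
  rfl

/-- Let `E` be a locally convex topological vector space, `P ⊆ E'`
a closed convex cone in the dual (with the weak-* topology) with a compact convex
basis `P̃` (so `P̃` is compact convex, `0 ∉ P̃`, and `P = ℝ≥0 · P̃`), and `L ⊆ E'` a
closed linear subspace with `L ∩ P̃ = ∅`. Then there exists `Ω ∈ E` such that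
`T(Ω) = 0` for all `T ∈ L` and `T(Ω) > 0` for all `T ∈ P̃`. -/
theorem separation_of_cone_basis_from_subspace
    {E : Type*} [AddCommGroup E] [Module ℝ E] [TopologicalSpace E]
    [IsTopologicalAddGroup E] [ContinuousSMul ℝ E] [LocallyConvexSpace ℝ E]
    (P Pt : Set (WeakDual ℝ E))
    (hPbasis : P = {x | ∃ c : ℝ, 0 ≤ c ∧ ∃ y ∈ Pt, x = c • y})
    (hPclosed : IsClosed P) (hPconv : Convex ℝ P)
    (hPtcompact : IsCompact Pt) (hPtconv : Convex ℝ Pt)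
    (hPt0 : (0 : WeakDual ℝ E) ∉ Pt)
    (L : Submodule ℝ (WeakDual ℝ E))
    (hLclosed : IsClosed (L : Set (WeakDual ℝ E)))
    (hdisj : (L : Set (WeakDual ℝ E)) ∩ Pt = ∅) :
    ∃ Ω : E, (∀ T ∈ L, T Ω = 0) ∧ ∀ T ∈ Pt, 0 < T Ω := by
  rcases Set.eq_empty_or_nonempty Pt with hPtE | hPtne
  · exact ⟨0, fun T _ => map_zero T, by simp [hPtE]⟩
  haveI : LocallyConvexSpace ℝ (WeakDual ℝ E) := WeakBilin.locallyConvexSpace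
  have hdisj' : Disjoint Pt (L : Set (WeakDual ℝ E)) := by
    rw [Set.disjoint_iff_inter_eq_empty, Set.inter_comm, hdisj]
  obtain ⟨f, u, v, hfPt, huv, hfL⟩ :=
    geometric_hahn_banach_compact_closed hPtconv hPtcompact L.convex hLclosed hdisj'
  -- f vanishes on L
  have hfL0 : ∀ b ∈ L, f b = 0 := by
    intro b hb
    by_contra hne
    have h1 : v < f (((v - 1) / f b) • b) := hfL _ (L.smul_mem _ hb)
    rw [map_smul, smul_eq_mul, div_mul_cancel₀ _ hne] at h1
    linarith
  have hv0 : v < 0 := by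
    have := hfL 0 L.zero_mem
    rw [map_zero] at this
    linarith
  obtain ⟨Ω₀, hΩ₀⟩ := weakDual_eval_surj f
  refine ⟨-Ω₀, fun T hT => ?_, fun T hT => ?_⟩
  · rw [map_neg, ← hΩ₀, hfL0 T hT, neg_zero]
  · rw [map_neg, ← hΩ₀]
    have := hfPt T hT
    linarith
end
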